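/- If r is a real number with 0 < {r} denoting its fractional part, and b ≥ 1 an integer, then the limit as n → ∞ (over integers n with rn ∈ ℤ) of ((2n)!^{2b{r}} / (2{r}n)!^{2b})^{1/n} equals {r}^{-4b{r}}, where for {r}=0 the right-hand side is interpreted as 1. -/

import Mathlib

open Filter Real

noncomputable def hfun (m : ℕ) : ℝ := Real.log m.factorial - ((m:ℝ) * Real.log m - m)

lemma hfun_eq (m : ℕ) (hm : 1 ≤ m) :
    hfun m = Real.log (Stirling.stirlingSeq m) + 1/2 * Real.log (2*m) := by
  have hm0 : (0:ℝ) < m := by exact_mod_cast hm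
  rw [Stirling.log_stirlingSeq_formula, Real.log_div (ne_of_gt hm0) (Real.exp_ne_zero 1),
    Real.log_exp]
  unfold hfun; ring

lemma log_div_nat : Tendsto (fun m : ℕ => Real.log m / m) atTop (nhds 0) :=
  Real.isLittleO_log_id_atTop.tendsto_div_nhds_zero.comp tendsto_natCast_atTop_atTop

lemma log_two_mul_div_nat : Tendsto (fun m : ℕ => Real.log (2*m) / m) atTop (nhds 0) := by
  have l2 : Tendsto (fun m : ℕ => Real.log 2 / m) atTop (nhds 0) :=
    tendsto_const_nhds.div_atTop tendsto_natCast_atTop_atTop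
  have := l2.add log_div_nat
  rw [add_zero] at this
  apply this.congr'
  filter_upwards [eventually_ge_atTop 1] with m hm
  have hm0 : (m:ℝ) ≠ 0 := by positivity
  rw [Real.log_mul two_ne_zero hm0, add_div]

lemma hfun_tendsto : Tendsto (fun m : ℕ => hfun m / m) atTop (nhds 0) := by
  have h1 : Tendsto (fun m : ℕ => Real.log (Stirling.stirlingSeq m)) atTop
      (nhds (Real.log (Real.sqrt Real.pi))) :=
    ((Real.continuousAt_log (by positivity)).tendsto).comp Stirling.tendsto_stirlingSeq_sqrt_pi
  have h2 : Tendsto (fun m : ℕ => Real.log (Stirling.stirlingSeq m) / m) atTop (nhds 0) :=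
    h1.div_atTop tendsto_natCast_atTop_atTop
  have h3 := h2.add (log_two_mul_div_nat.const_mul (1/2 : ℝ))
  rw [mul_zero, add_zero] at h3
  apply h3.congr'
  filter_upwards [eventually_ge_atTop 1] with m hm
  rw [hfun_eq m hm]
  ring

theorem stmt_3 (r : ℝ) (hr : 0 < Int.fract r) (b : ℕ) (hb : 1 ≤ b) :
    Tendsto
      (fun n : ℕ =>
        (((2*n).factorial : ℝ) ^ (2*(b:ℝ)*Int.fract r) /
          ((Nat.floor (2 * Int.fract r * n)).factorial : ℝ) ^ (2*b)) ^ ((1:ℝ)/(n:ℝ)))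
      (atTop ⊓ 𝓟 {n : ℕ | ∃ m : ℤ, r * n = (m:ℝ)})
      (nhds (Int.fract r ^ (-(4*(b:ℝ)*Int.fract r)))) := by
  set f := Int.fract r with hf
  set F := atTop ⊓ 𝓟 {n : ℕ | ∃ m : ℤ, r * n = (m:ℝ)} with hF
  set k : ℕ → ℕ := fun n => Nat.floor (2 * f * n) with hk
  -- on F, the floor is exact
  have hfloor : ∀ᶠ n in F, (k n : ℝ) = 2 * f * n := by
    rw [hF, eventually_inf_principal]
    filter_upwards with n hn
    obtain ⟨m, hm⟩ := hn
    have hfn : f * n = (m:ℝ) - (⌊r⌋:ℝ) * n := by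
      rw [hf, Int.fract, sub_mul, hm]
    have hnn : (0:ℝ) ≤ 2 * f * n := by positivity
    have hj : (0:ℤ) ≤ 2 * (m - ⌊r⌋ * n) := by
      have hc : (0:ℝ) ≤ ((2 * (m - ⌊r⌋ * n) : ℤ) : ℝ) := by
        push_cast; linarith
      exact_mod_cast hc
    have h2fn : 2 * f * n = (((2 * (m - ⌊r⌋ * n)).toNat : ℕ) : ℝ) := by
      have hc : (((2 * (m - ⌊r⌋ * n)).toNat : ℕ) : ℝ) = ((2 * (m - ⌊r⌋ * n) : ℤ) : ℝ) := by
        exact_mod_cast congrArg (fun z : ℤ => (z : ℝ)) (Int.toNat_of_nonneg hj)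
      rw [hc]; push_cast; linarith
    rw [hk]
    simp only
    rw [h2fn, Nat.floor_natCast]
  have hge1 : ∀ᶠ n in F, 1 ≤ n := (eventually_ge_atTop 1).filter_mono inf_le_left
  -- k tends to infinity along F
  have htk : Tendsto (fun n => (k n : ℝ)) F atTop := by
    apply Tendsto.congr' (hfloor.mono fun n h => h.symm)
    exact ((tendsto_natCast_atTop_atTop (R := ℝ)).const_mul_atTop (by positivity : (0:ℝ) < 2*f)).mono_left inf_le_left
  have hkt : Tendsto k F atTop := by
    rw [← tendsto_natCast_atTop_iff (R := ℝ)]; exact htk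
  have A2 : Tendsto (fun n => hfun (k n) / (k n : ℝ)) F (nhds 0) := hfun_tendsto.comp hkt
  have h2n : Tendsto (fun n : ℕ => 2 * n) atTop atTop :=
    tendsto_atTop_mono (fun n => by simp only [id]; omega) tendsto_id
  have A1 : Tendsto (fun n : ℕ => hfun (2*n) / ((2*n : ℕ) : ℝ)) F (nhds 0) :=
    (hfun_tendsto.comp h2n).mono_left inf_le_left
  -- the exponent function
  set E : ℕ → ℝ := fun n =>
    (2*(b:ℝ)*f) * (2 * (hfun (2*n) / ((2*n : ℕ) : ℝ)))
      - (2*(b:ℝ)) * ((2*f) * (hfun (k n) / ((k n : ℕ) : ℝ)))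
      - 4*(b:ℝ)*f*Real.log f with hE
  have hEt : Tendsto E F (nhds (Real.log f * (-(4*(b:ℝ)*f)))) := by
    have := (((A1.const_mul (2:ℝ)).const_mul (2*(b:ℝ)*f)).sub
      ((A2.const_mul (2*f)).const_mul (2*(b:ℝ)))).sub_const (4*(b:ℝ)*f*Real.log f)
    convert this using 2 <;> ring
  have heq : ∀ᶠ n in F,
      (((2*n).factorial : ℝ) ^ (2*(b:ℝ)*f) /
          ((k n).factorial : ℝ) ^ (2*b)) ^ ((1:ℝ)/(n:ℝ)) = Real.exp (E n) := by
    filter_upwards [hfloor, hge1] with n hkn hn1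
    have hn0 : (0:ℝ) < n := by exact_mod_cast hn1
    have hA : (0:ℝ) < ((2*n).factorial : ℝ) := by exact_mod_cast (2*n).factorial_pos
    have hB : (0:ℝ) < ((k n).factorial : ℝ) := by exact_mod_cast (k n).factorial_pos
    have hApow : (0:ℝ) < ((2*n).factorial : ℝ) ^ (2*(b:ℝ)*f) := Real.rpow_pos_of_pos hA _
    have hBpow : (0:ℝ) < ((k n).factorial : ℝ) ^ (2*b) := pow_pos hB _
    rw [Real.rpow_def_of_pos (div_pos hApow hBpow)]
    congr 1
    rw [Real.log_div (ne_of_gt hApow) (ne_of_gt hBpow), Real.log_rpow hA, Real.log_pow]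
    have hkpos : (0:ℝ) < (k n : ℝ) := by rw [hkn]; positivity
    have hlog2n : Real.log ((2*n : ℕ) : ℝ) = Real.log 2 + Real.log n := by
      push_cast
      rw [Real.log_mul two_ne_zero (ne_of_gt hn0)]
    have hlogkn : Real.log ((k n : ℕ) : ℝ) = Real.log f + Real.log 2 + Real.log n := by
      rw [hkn, show 2 * f * (n:ℝ) = f * (2 * n) by ring,
        Real.log_mul (ne_of_gt hr) (by positivity),
        Real.log_mul two_ne_zero (ne_of_gt hn0)]
      ring
    have e1 : Real.log ((2*n).factorial : ℝ) =
        hfun (2*n) + ((2*n : ℕ) : ℝ) * Real.log ((2*n : ℕ) : ℝ) - ((2*n : ℕ) : ℝ) := by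
      unfold hfun; ring
    have e2 : Real.log ((k n).factorial : ℝ) =
        hfun (k n) + ((k n : ℕ) : ℝ) * Real.log ((k n : ℕ) : ℝ) - ((k n : ℕ) : ℝ) := by
      unfold hfun; ring
    rw [hE]
    simp only
    rw [e1, e2, hlog2n, hlogkn, hkn]
    have hcast : ((2*n : ℕ) : ℝ) = 2 * (n : ℝ) := by push_cast; ring
    rw [hcast]
    field_simp
    push_cast
    ring
  have final := (Real.continuous_exp.tendsto _).comp hEt
  rw [show f ^ (-(4*(b:ℝ)*f)) = Real.exp (Real.log f * (-(4*(b:ℝ)*f))) from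
    Real.rpow_def_of_pos hr _]
  exact Tendsto.congr' (EventuallyEq.symm heq) final
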